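/- Let z ∈ ℂ^N with Re z_j > 0 for all j, and let ν̲ = (ν₀, ν) with Re ν₀ > 0 and (Re ν_1/Re ν₀, …, Re ν_n/Re ν₀) in the interior of the full-dimensional Newton polytope Δ_G. Then for every real s > 0: (a) J_A(ν̲, (s·z_1, …, s·z_N)) = s^{−ν₀} · J_A(ν̲, z); and (b) for every b ∈ {1, …, n}, J_A(ν̲, (s^{(a_1)_b}·z_1, …, s^{(a_N)_b}·z_N)) = s^{−ν_b} · J_A(ν̲, z), where (a_j)_b denotes the b-th entry of the exponent vector a_j and s^{−ν₀}, s^{−ν_b} are principal complex powers. -/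
import Mathlib

open MeasureTheory Complex Finset

lemma cpow_real_mul' {s : ℝ} (hs : 0 < s) (w c : ℂ) :
    ((s : ℂ) * w) ^ c = (s : ℂ) ^ c * w ^ c := by
  rcases eq_or_ne c 0 with rfl | hc
  · simp
  rcases eq_or_ne w 0 with rfl | hw
  · simp [Complex.zero_cpow hc]
  have hs' : (s : ℂ) ≠ 0 := Complex.ofReal_ne_zero.mpr hs.ne'
  rw [Complex.cpow_def_of_ne_zero (mul_ne_zero hs' hw),
    Complex.log_ofReal_mul hs hw, Complex.cpow_def_of_ne_zero hs',
    Complex.cpow_def_of_ne_zero hw, add_mul, Complex.exp_add,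
    Complex.ofReal_log hs.le]

theorem feynman_scaling (n N : ℕ) (hn : 1 ≤ n) (hN : n + 1 ≤ N)
    (a : Fin N → Fin n → ℕ)
    (z : Fin N → ℂ) (hz : ∀ j, 0 < (z j).re)
    (ν₀ : ℂ) (ν : Fin n → ℂ) (hν₀ : 0 < ν₀.re)
    (hmem : (fun i => (ν i).re / ν₀.re) ∈
      interior (convexHull ℝ (Set.range fun j : Fin N => fun i : Fin n => (a j i : ℝ)))) :
    ∀ s : ℝ, 0 < s →
      (Complex.Gamma ν₀ *
          ∫ x in {x : Fin n → ℝ | ∀ i, 0 < x i},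
            (∏ i, (x i : ℂ) ^ (ν i - 1)) *
              (∑ j, ((s : ℂ) * z j) * ∏ i, (x i : ℂ) ^ (a j i)) ^ (-ν₀)
        = (s : ℂ) ^ (-ν₀) *
            (Complex.Gamma ν₀ *
              ∫ x in {x : Fin n → ℝ | ∀ i, 0 < x i},
                (∏ i, (x i : ℂ) ^ (ν i - 1)) *
                  (∑ j, z j * ∏ i, (x i : ℂ) ^ (a j i)) ^ (-ν₀))) ∧
      ∀ b : Fin n,
        Complex.Gamma ν₀ *
            ∫ x in {x : Fin n → ℝ | ∀ i, 0 < x i},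
              (∏ i, (x i : ℂ) ^ (ν i - 1)) *
                (∑ j, ((s : ℂ) ^ (a j b) * z j) * ∏ i, (x i : ℂ) ^ (a j i)) ^ (-ν₀)
          = (s : ℂ) ^ (-(ν b)) *
              (Complex.Gamma ν₀ *
                ∫ x in {x : Fin n → ℝ | ∀ i, 0 < x i},
                  (∏ i, (x i : ℂ) ^ (ν i - 1)) *
                    (∑ j, z j * ∏ i, (x i : ℂ) ^ (a j i)) ^ (-ν₀)) := by
  intro s hs
  have hs0 : (s : ℂ) ≠ 0 := Complex.ofReal_ne_zero.mpr hs.ne'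
  constructor
  · -- part (a)
    have hpt : ∀ x : Fin n → ℝ,
        (∏ i, (x i : ℂ) ^ (ν i - 1)) *
            (∑ j, ((s : ℂ) * z j) * ∏ i, (x i : ℂ) ^ (a j i)) ^ (-ν₀)
          = (s : ℂ) ^ (-ν₀) *
            ((∏ i, (x i : ℂ) ^ (ν i - 1)) *
              (∑ j, z j * ∏ i, (x i : ℂ) ^ (a j i)) ^ (-ν₀)) := by
      intro x
      have h1 : (∑ j, ((s : ℂ) * z j) * ∏ i, (x i : ℂ) ^ (a j i))
          = (s : ℂ) * ∑ j, z j * ∏ i, (x i : ℂ) ^ (a j i) := by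
        rw [Finset.mul_sum]
        exact Finset.sum_congr rfl fun j _ => by ring
      rw [h1, cpow_real_mul' hs]
      ring
    simp_rw [hpt, MeasureTheory.integral_const_mul]
    ring
  · -- part (b)
    intro b
    set Ω : Set (Fin n → ℝ) := {x : Fin n → ℝ | ∀ i, 0 < x i} with hΩdef
    have hΩ : MeasurableSet Ω := by
      have : Ω = ⋂ i, {x : Fin n → ℝ | 0 < x i} := by ext x; simp [hΩdef]
      rw [this]
      exact MeasurableSet.iInter fun i =>
        measurableSet_lt measurable_const (measurable_pi_apply i)
    set ℓ : (Fin n → ℝ) →ₗ[ℝ] (Fin n → ℝ) :=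
      LinearMap.pi (fun i => if i = b then s • LinearMap.proj i else LinearMap.proj i) with hℓdef
    have hℓapp : ∀ (x : Fin n → ℝ) (i : Fin n), ℓ x i = if i = b then s * x i else x i := by
      intro x i
      by_cases h : i = b <;> simp [hℓdef, LinearMap.pi_apply, h]
    set L : (Fin n → ℝ) →L[ℝ] (Fin n → ℝ) := LinearMap.toContinuousLinearMap ℓ with hLdef
    have hLapp : ∀ (x : Fin n → ℝ) (i : Fin n), L x i = if i = b then s * x i else x i := by
      intro x i
      rw [hLdef, LinearMap.coe_toContinuousLinearMap']
      exact hℓapp x i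
    have hdet : L.det = s := by
      rw [hLdef, LinearMap.det_toContinuousLinearMap,
        ← LinearMap.det_toMatrix (Pi.basisFun ℝ (Fin n))]
      have hmat : LinearMap.toMatrix (Pi.basisFun ℝ (Fin n)) (Pi.basisFun ℝ (Fin n)) ℓ
          = Matrix.diagonal (fun i => if i = b then s else 1) := by
        ext i j
        rw [LinearMap.toMatrix_apply, Pi.basisFun_repr, hℓapp]
        rcases eq_or_ne i j with rfl | hij
        · simp [Matrix.diagonal]
        · simp [Matrix.diagonal_apply_ne' _ (Ne.symm hij).symm, hij,
            Pi.basisFun_apply, Pi.single_eq_of_ne hij]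
      rw [hmat, Matrix.det_diagonal, Finset.prod_ite_eq']
      simp
    have hinj : Set.InjOn (⇑L) Ω := by
      intro x _ y _ h
      funext i
      have hi := congrFun h i
      rw [hLapp, hLapp] at hi
      by_cases hib : i = b
      · rw [if_pos hib, if_pos hib] at hi
        exact mul_left_cancel₀ hs.ne' hi
      · rwa [if_neg hib, if_neg hib] at hi
    have himg : L '' Ω = Ω := by
      ext y
      constructor
      · rintro ⟨x, hx, rfl⟩
        intro i
        rw [hLapp]
        by_cases hib : i = b
        · rw [if_pos hib]; exact mul_pos hs (hx i)
        · rw [if_neg hib]; exact hx i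
      · intro hy
        refine ⟨fun i => if i = b then y i / s else y i, fun i => ?_, ?_⟩
        · simp only []
          by_cases hib : i = b
          · rw [if_pos hib]; exact div_pos (hy i) hs
          · rw [if_neg hib]; exact hy i
        · funext i
          rw [hLapp]
          by_cases hib : i = b
          · simp only [if_pos hib]
            field_simp
          · simp only [if_neg hib]
    have hchg : (∫ x in Ω,
          (∏ i, (x i : ℂ) ^ (ν i - 1)) *
            (∑ j, z j * ∏ i, (x i : ℂ) ^ (a j i)) ^ (-ν₀))
        = ∫ x in Ω, |L.det| •
            ((∏ i, ((L x i : ℝ) : ℂ) ^ (ν i - 1)) *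
              (∑ j, z j * ∏ i, ((L x i : ℝ) : ℂ) ^ (a j i)) ^ (-ν₀)) := by
      conv_lhs => rw [← himg]
      exact integral_image_eq_integral_abs_det_fderiv_smul volume hΩ
        (fun x _ => L.hasFDerivAt.hasFDerivWithinAt) hinj _
    have hpt : ∀ x ∈ Ω, |L.det| •
            ((∏ i, ((L x i : ℝ) : ℂ) ^ (ν i - 1)) *
              (∑ j, z j * ∏ i, ((L x i : ℝ) : ℂ) ^ (a j i)) ^ (-ν₀))
        = (s : ℂ) ^ (ν b) *
            ((∏ i, (x i : ℂ) ^ (ν i - 1)) *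
              (∑ j, ((s : ℂ) ^ (a j b) * z j) * ∏ i, (x i : ℂ) ^ (a j i)) ^ (-ν₀)) := by
      intro x hx
      have hP1 : (∏ i, ((L x i : ℝ) : ℂ) ^ (ν i - 1))
          = (s : ℂ) ^ (ν b - 1) * ∏ i, (x i : ℂ) ^ (ν i - 1) := by
        have hfac : ∀ i : Fin n, ((L x i : ℝ) : ℂ) ^ (ν i - 1)
            = (if i = b then (s : ℂ) ^ (ν i - 1) else 1) * (x i : ℂ) ^ (ν i - 1) := by
          intro i
          rw [hLapp]
          by_cases h : i = b
          · simp only [if_pos h]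
            rw [Complex.ofReal_mul, cpow_real_mul' hs]
          · simp [h]
        rw [Finset.prod_congr rfl fun i _ => hfac i, Finset.prod_mul_distrib,
          Finset.prod_ite_eq']
        simp
      have hP2 : (∑ j, z j * ∏ i, ((L x i : ℝ) : ℂ) ^ (a j i))
          = ∑ j, ((s : ℂ) ^ (a j b) * z j) * ∏ i, (x i : ℂ) ^ (a j i) := by
        refine Finset.sum_congr rfl fun j _ => ?_
        have : (∏ i, ((L x i : ℝ) : ℂ) ^ (a j i))
            = (s : ℂ) ^ (a j b) * ∏ i, (x i : ℂ) ^ (a j i) := by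
          have hfac : ∀ i : Fin n, ((L x i : ℝ) : ℂ) ^ (a j i)
              = (if i = b then (s : ℂ) ^ (a j i) else 1) * (x i : ℂ) ^ (a j i) := by
            intro i
            rw [hLapp]
            by_cases h : i = b
            · simp only [if_pos h]
              push_cast
              ring
            · simp [h]
          rw [Finset.prod_congr rfl fun i _ => hfac i, Finset.prod_mul_distrib,
            Finset.prod_ite_eq']
          simp
        rw [this]
        ring
      rw [hP1, hP2, hdet, abs_of_pos hs, Complex.real_smul]
      have hss : (s : ℂ) ^ (ν b) = (s : ℂ) * (s : ℂ) ^ (ν b - 1) := by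
        have h2 : ν b = 1 + (ν b - 1) := by ring
        calc (s : ℂ) ^ (ν b) = (s : ℂ) ^ (1 + (ν b - 1)) := by rw [← h2]
          _ = (s : ℂ) * (s : ℂ) ^ (ν b - 1) := by
              rw [Complex.cpow_add _ _ hs0, Complex.cpow_one]
      rw [hss]
      ring
    rw [hchg, MeasureTheory.setIntegral_congr_fun hΩ hpt, MeasureTheory.integral_const_mul]
    have h1 : (s : ℂ) ^ (-(ν b)) * (s : ℂ) ^ (ν b) = 1 := by
      rw [← Complex.cpow_add _ _ hs0]
      simp
    set I : ℂ := ∫ x in Ω,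
      (∏ i, (x i : ℂ) ^ (ν i - 1)) *
        (∑ j, ((s : ℂ) ^ (a j b) * z j) * ∏ i, (x i : ℂ) ^ (a j i)) ^ (-ν₀) with hI
    calc Complex.Gamma ν₀ * I
        = ((s : ℂ) ^ (-(ν b)) * (s : ℂ) ^ (ν b)) * (Complex.Gamma ν₀ * I) := by
          rw [h1, one_mul]
      _ = (s : ℂ) ^ (-(ν b)) * (Complex.Gamma ν₀ * ((s : ℂ) ^ (ν b) * I)) := by ring
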